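/- With ν = −(1/(2π)) log(1+|γ(k₀)|²) and δ(k) = ((k−k₀)/(k+k₀))^{iν} e^{𝒳(k)} as above, for all k ∈ ℂ \ [−k₀,k₀] one has δ(k)·δ*(k*) = 1, where δ*(k*) denotes the complex conjugate of δ evaluated at conj(k). In particular |δ(k)| ≤ C uniformly on ℂ. -/

import Mathlib

open Complex

private lemma conj_intervalIntegral (f : ℝ → ℂ) (a b : ℝ) :
    (starRingEnd ℂ) (∫ x in a..b, f x) = ∫ x in a..b, (starRingEnd ℂ) (f x) := by
  simp only [intervalIntegral, integral_conj, map_sub]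

private lemma im_intervalIntegral (f : ℝ → ℂ) (a b : ℝ)
    (hf : IntervalIntegrable f MeasureTheory.volume a b) :
    (∫ x in a..b, f x).im = ∫ x in a..b, (f x).im := by
  simpa using (ContinuousLinearMap.intervalIntegral_comp_comm Complex.imCLM hf).symm

private lemma poisson_integral_le (x y a b : ℝ) (hy : y ≠ 0) :
    ∫ ξ in a..b, |y| / ((ξ - x)^2 + y^2) ≤ Real.pi := by
  have hay : |y| ≠ 0 := abs_ne_zero.mpr hy
  have h1 : ∀ ξ : ℝ, |y| / ((ξ - x)^2 + y^2) = (1 + ((ξ - x) / |y|)^2)⁻¹ * |y|⁻¹ := by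
    intro ξ
    have h0 : (ξ - x)^2 + y^2 ≠ 0 := by positivity
    field_simp
    rw [_root_.sq_abs]
    ring
  have e1 : ∫ ξ in a..b, (1 + ((ξ - x) / |y|)^2)⁻¹
      = ∫ u in (a-x)..(b-x), (1 + (u / |y|)^2)⁻¹ :=
    intervalIntegral.integral_comp_sub_right (fun u => (1 + (u / |y|)^2)⁻¹) x
  have e2 : ∫ u in (a-x)..(b-x), (1 + (u / |y|)^2)⁻¹
      = |y| • ∫ v in ((a-x)/|y|)..((b-x)/|y|), (1 + v^2)⁻¹ :=
    intervalIntegral.integral_comp_div (f := fun v => (1 + v^2)⁻¹) hay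
  calc ∫ ξ in a..b, |y| / ((ξ - x)^2 + y^2)
      = ∫ ξ in a..b, (1 + ((ξ - x) / |y|)^2)⁻¹ * |y|⁻¹ :=
        intervalIntegral.integral_congr fun ξ _ => h1 ξ
    _ = (∫ ξ in a..b, (1 + ((ξ - x) / |y|)^2)⁻¹) * |y|⁻¹ :=
        intervalIntegral.integral_mul_const _ _
    _ = (|y| • ∫ v in ((a-x)/|y|)..((b-x)/|y|), (1 + v^2)⁻¹) * |y|⁻¹ := by rw [e1, e2]
    _ = Real.arctan ((b-x)/|y|) - Real.arctan ((a-x)/|y|) := by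
        rw [integral_inv_one_add_sq, smul_eq_mul]
        field_simp
    _ ≤ Real.pi := by
        have h2 := Real.arctan_lt_pi_div_two ((b-x)/|y|)
        have h3 := Real.neg_pi_div_two_lt_arctan ((a-x)/|y|)
        linarith

/-- With δ as in the scalar RH problem, δ(k)·δ*(k*) = 1 off the cut [−k₀,k₀];
in particular |δ| is uniformly bounded on ℂ. -/
theorem delta_unitarity_and_bound
    (k₀ : ℝ) (hk₀ : 0 < k₀) (γ : ℝ → ℂ) (hγ : Continuous γ)
    (hγsym : ∀ k : ℝ, ‖γ (-k)‖ = ‖γ k‖)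
    (ν : ℝ) (hν : ν = -(1/(2*Real.pi)) * Real.log (1 + ‖γ k₀‖^2))
    (X : ℂ → ℂ)
    (hX : ∀ k : ℂ, X k = (1/(2*Real.pi*Complex.I)) *
      ∫ ξ in (-k₀)..k₀, ((Real.log ((1 + ‖γ ξ‖^2)/(1 + ‖γ k₀‖^2)) : ℝ) : ℂ) / ((ξ:ℂ) - k))
    (δ : ℂ → ℂ)
    (hδ : ∀ k : ℂ, δ k = ((k - (k₀:ℂ))/(k + (k₀:ℂ))) ^ (Complex.I * (ν:ℂ)) * Complex.exp (X k)) :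
    (∀ k : ℂ, k ∉ (fun x : ℝ => (x:ℂ)) '' Set.Icc (-k₀) k₀ →
      δ k * (starRingEnd ℂ) (δ ((starRingEnd ℂ) k)) = 1) ∧
    ∃ C : ℝ, ∀ k : ℂ, ‖δ k‖ ≤ C := by
  have hπ : (0:ℝ) < Real.pi := Real.pi_pos
  have hcconj : (starRingEnd ℂ) (1/(2*(Real.pi:ℂ)*Complex.I)) = -(1/(2*(Real.pi:ℂ)*Complex.I)) := by
    rw [map_div₀, map_one, map_mul, map_mul, Complex.conj_I, Complex.conj_ofReal,
      map_ofNat (starRingEnd ℂ) 2]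
    ring
  constructor
  · -- unitarity
    intro k hk
    have hBm : k - (k₀:ℂ) ≠ 0 := by
      intro h
      exact hk ⟨k₀, ⟨by linarith, le_rfl⟩, (sub_eq_zero.mp h).symm⟩
    have hBp : k + (k₀:ℂ) ≠ 0 := by
      intro h
      refine hk ⟨-k₀, ⟨le_rfl, by linarith⟩, ?_⟩
      have : k = -(k₀:ℂ) := by linear_combination h
      simp [this]
    set z : ℂ := (k - (k₀:ℂ))/(k + (k₀:ℂ)) with hzdef
    have hz0 : z ≠ 0 := div_ne_zero hBm hBp
    have hns : (0:ℝ) < Complex.normSq (k + (k₀:ℂ)) := Complex.normSq_pos.mpr hBp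
    have harg : z.arg ≠ Real.pi := by
      intro h
      obtain ⟨hre, him⟩ := Complex.arg_eq_pi_iff.mp h
      have hzim : z.im = 2*k₀*k.im / Complex.normSq (k + (k₀:ℂ)) := by
        rw [hzdef, Complex.div_im]
        simp only [Complex.sub_re, Complex.sub_im, Complex.add_re, Complex.add_im,
          Complex.ofReal_re, Complex.ofReal_im]
        ring
      have hzre : z.re = ((k.re - k₀)*(k.re + k₀) + k.im*k.im) / Complex.normSq (k + (k₀:ℂ)) := by
        rw [hzdef, Complex.div_re]
        simp only [Complex.sub_re, Complex.sub_im, Complex.add_re, Complex.add_im,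
          Complex.ofReal_re, Complex.ofReal_im]
        ring
      rw [hzim] at him
      have hkim : k.im = 0 := by
        have h2 := (div_eq_zero_iff.mp him).resolve_right (by linarith)
        nlinarith
      rw [hzre, hkim] at hre
      have hnum : (k.re - k₀)*(k.re + k₀) < 0 := by
        rcases (div_neg_iff.mp (by simpa using hre)) with ⟨_, h2⟩ | ⟨h1, _⟩
        · linarith
        · exact h1
      refine hk ⟨k.re, ⟨by nlinarith, by nlinarith⟩, ?_⟩
      exact Complex.ext rfl hkim.symm
    have hc1 : ((starRingEnd ℂ) k - (k₀:ℂ)) / ((starRingEnd ℂ) k + (k₀:ℂ)) = (starRingEnd ℂ) z := by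
      rw [hzdef, map_div₀, map_sub, map_add, Complex.conj_ofReal]
    have hXc : (starRingEnd ℂ) (X ((starRingEnd ℂ) k)) = - X k := by
      rw [hX ((starRingEnd ℂ) k), hX k, map_mul, conj_intervalIntegral]
      have hpt : ∀ ξ : ℝ, ξ ∈ Set.uIcc (-k₀) k₀ →
          (starRingEnd ℂ) (((Real.log ((1 + ‖γ ξ‖^2)/(1 + ‖γ k₀‖^2)) : ℝ) : ℂ) / ((ξ:ℂ) - (starRingEnd ℂ) k))
          = ((Real.log ((1 + ‖γ ξ‖^2)/(1 + ‖γ k₀‖^2)) : ℝ) : ℂ) / ((ξ:ℂ) - k) := by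
        intro ξ _
        rw [map_div₀, map_sub, Complex.conj_ofReal, Complex.conj_ofReal, Complex.conj_conj]
      rw [intervalIntegral.integral_congr hpt, hcconj]
      ring
    rw [hδ k, hδ ((starRingEnd ℂ) k), hc1, Complex.conj_cpow _ _ harg, map_mul, Complex.conj_conj,
      ← Complex.exp_conj, hXc]
    have hconjn : (starRingEnd ℂ) (Complex.I * (ν:ℂ)) = -(Complex.I * (ν:ℂ)) := by
      simp [Complex.conj_I, Complex.conj_ofReal]
    rw [hconjn]
    have hre : z ^ (Complex.I * (ν:ℂ)) * Complex.exp (X k) *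
        (z ^ (-(Complex.I * (ν:ℂ))) * Complex.exp (-X k))
        = (z ^ (Complex.I * (ν:ℂ)) * z ^ (-(Complex.I * (ν:ℂ)))) *
          (Complex.exp (X k) * Complex.exp (-X k)) := by ring
    rw [hre, ← Complex.cpow_add _ _ hz0, ← Complex.exp_add]
    simp
  · -- boundedness
    have hfcont : Continuous (fun ξ : ℝ => Real.log ((1 + ‖γ ξ‖^2)/(1 + ‖γ k₀‖^2))) := by
      apply Continuous.log
      · exact (continuous_const.add ((hγ.norm).pow 2)).div_const _
      · intro ξ
        positivity
    obtain ⟨C, hC⟩ := (isCompact_Icc : IsCompact (Set.Icc (-k₀) k₀)).exists_bound_of_continuousOn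
      hfcont.continuousOn
    have hC0 : 0 ≤ C := le_trans (norm_nonneg _) (hC k₀ ⟨by linarith, le_rfl⟩)
    have hrec : ∀ I : ℂ, ((1/(2*(Real.pi:ℂ)*Complex.I)) * I).re = I.im / (2*Real.pi) := by
      intro I
      have h1 : (1/(2*(Real.pi:ℂ)*Complex.I)) * I = I / (2*(Real.pi:ℂ)*Complex.I) := by ring
      have hre : (2*(Real.pi:ℂ)*Complex.I).re = 0 := by simp
      have him : (2*(Real.pi:ℂ)*Complex.I).im = 2*Real.pi := by simp
      have hns : Complex.normSq (2*(Real.pi:ℂ)*Complex.I) = (2*Real.pi)^2 := by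
        rw [Complex.normSq_apply, hre, him]; ring
      rw [h1, Complex.div_re, hre, him, hns]
      field_simp
      ring
    have hXre : ∀ k : ℂ, (X k).re ≤ C := by
      intro k
      rw [hX k, hrec]
      by_cases hky : k.im = 0
      · -- real k : integrand is real valued, so the integral has zero imaginary part
        by_cases hint : IntervalIntegrable
            (fun ξ : ℝ => ((Real.log ((1 + ‖γ ξ‖^2)/(1 + ‖γ k₀‖^2)) : ℝ) : ℂ) / ((ξ:ℂ) - k))
            MeasureTheory.volume (-k₀) k₀
        · rw [im_intervalIntegral _ _ _ hint]
          have hz : (∫ ξ in (-k₀)..k₀,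
              (((Real.log ((1 + ‖γ ξ‖^2)/(1 + ‖γ k₀‖^2)) : ℝ) : ℂ) / ((ξ:ℂ) - k)).im) = 0 := by
            have hpt : ∀ ξ : ℝ, ξ ∈ Set.uIcc (-k₀) k₀ →
                (((Real.log ((1 + ‖γ ξ‖^2)/(1 + ‖γ k₀‖^2)) : ℝ) : ℂ) / ((ξ:ℂ) - k)).im
                = (0:ℝ) := by
              intro ξ _
              rw [Complex.div_im]
              simp [Complex.sub_im, hky]
            rw [intervalIntegral.integral_congr hpt]
            simp
          rw [hz]
          simpa using hC0
        · rw [intervalIntegral.integral_undef hint]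
          simpa using hC0
      · -- nonreal k
        have hden : ∀ ξ : ℝ, (ξ:ℂ) - k ≠ 0 := by
          intro ξ h
          apply hky
          have := congrArg Complex.im h
          simpa using this.symm
        have hgc : Continuous
            (fun ξ : ℝ => ((Real.log ((1 + ‖γ ξ‖^2)/(1 + ‖γ k₀‖^2)) : ℝ) : ℂ) / ((ξ:ℂ) - k)) :=
          (Complex.continuous_ofReal.comp hfcont).div
            (Complex.continuous_ofReal.sub continuous_const) hden
        have hint : IntervalIntegrable
            (fun ξ : ℝ => ((Real.log ((1 + ‖γ ξ‖^2)/(1 + ‖γ k₀‖^2)) : ℝ) : ℂ) / ((ξ:ℂ) - k))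
            MeasureTheory.volume (-k₀) k₀ := hgc.intervalIntegrable _ _
        rw [im_intervalIntegral _ _ _ hint]
        have hgim : ∀ ξ : ℝ, ξ ∈ Set.uIcc (-k₀) k₀ →
            ((((Real.log ((1 + ‖γ ξ‖^2)/(1 + ‖γ k₀‖^2)) : ℝ) : ℂ) / ((ξ:ℂ) - k)).im : ℝ)
            = Real.log ((1 + ‖γ ξ‖^2)/(1 + ‖γ k₀‖^2)) * k.im / ((ξ - k.re)^2 + k.im^2) := by
          intro ξ _
          rw [Complex.div_im]
          simp only [Complex.normSq_apply, Complex.sub_re, Complex.sub_im,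
            Complex.ofReal_re, Complex.ofReal_im]
          ring
        rw [intervalIntegral.integral_congr hgim]
        have hcont2 : Continuous
            (fun ξ : ℝ => Real.log ((1 + ‖γ ξ‖^2)/(1 + ‖γ k₀‖^2)) * k.im / ((ξ - k.re)^2 + k.im^2)) := by
          apply Continuous.div (hfcont.mul continuous_const) (by fun_prop)
          intro ξ
          positivity
        have hcont3 : Continuous
            (fun ξ : ℝ => C * (|k.im| / ((ξ - k.re)^2 + k.im^2))) := by
          apply Continuous.mul continuous_const
          apply Continuous.div continuous_const (by fun_prop)
          intro ξ
          positivity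
        have hub : ∀ ξ ∈ Set.Icc (-k₀) k₀,
            Real.log ((1 + ‖γ ξ‖^2)/(1 + ‖γ k₀‖^2)) * k.im / ((ξ - k.re)^2 + k.im^2)
            ≤ C * (|k.im| / ((ξ - k.re)^2 + k.im^2)) := by
          intro ξ hξ
          have hd : (0:ℝ) < (ξ - k.re)^2 + k.im^2 := by positivity
          have h1 : Real.log ((1 + ‖γ ξ‖^2)/(1 + ‖γ k₀‖^2)) * k.im ≤ C * |k.im| := by
            calc Real.log ((1 + ‖γ ξ‖^2)/(1 + ‖γ k₀‖^2)) * k.im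
                ≤ |Real.log ((1 + ‖γ ξ‖^2)/(1 + ‖γ k₀‖^2)) * k.im| := le_abs_self _
              _ = |Real.log ((1 + ‖γ ξ‖^2)/(1 + ‖γ k₀‖^2))| * |k.im| := abs_mul _ _
              _ ≤ C * |k.im| := by
                  have h2 := hC ξ hξ
                  rw [Real.norm_eq_abs] at h2
                  exact mul_le_mul_of_nonneg_right h2 (abs_nonneg _)
          calc Real.log ((1 + ‖γ ξ‖^2)/(1 + ‖γ k₀‖^2)) * k.im / ((ξ - k.re)^2 + k.im^2)
              ≤ (C * |k.im|) / ((ξ - k.re)^2 + k.im^2) := by gcongr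
            _ = C * (|k.im| / ((ξ - k.re)^2 + k.im^2)) := by ring
        have hJle : (∫ ξ in (-k₀)..k₀,
            Real.log ((1 + ‖γ ξ‖^2)/(1 + ‖γ k₀‖^2)) * k.im / ((ξ - k.re)^2 + k.im^2))
            ≤ C * Real.pi := by
          calc (∫ ξ in (-k₀)..k₀,
              Real.log ((1 + ‖γ ξ‖^2)/(1 + ‖γ k₀‖^2)) * k.im / ((ξ - k.re)^2 + k.im^2))
              ≤ ∫ ξ in (-k₀)..k₀, C * (|k.im| / ((ξ - k.re)^2 + k.im^2)) :=
                intervalIntegral.integral_mono_on (by linarith)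
                  (hcont2.intervalIntegrable _ _) (hcont3.intervalIntegrable _ _) hub
            _ = C * ∫ ξ in (-k₀)..k₀, |k.im| / ((ξ - k.re)^2 + k.im^2) := by
                rw [intervalIntegral.integral_const_mul]
            _ ≤ C * Real.pi :=
                mul_le_mul_of_nonneg_left (poisson_integral_le k.re k.im _ _ hky) hC0
        have h2 : (∫ ξ in (-k₀)..k₀,
            Real.log ((1 + ‖γ ξ‖^2)/(1 + ‖γ k₀‖^2)) * k.im / ((ξ - k.re)^2 + k.im^2)) / (2*Real.pi)
            ≤ (C * Real.pi) / (2*Real.pi) := by gcongr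
        have h3 : (C * Real.pi) / (2*Real.pi) = C/2 := by
          field_simp
        rw [h3] at h2
        linarith
    refine ⟨Real.exp (Real.pi * |ν|) * Real.exp C, fun k => ?_⟩
    rw [hδ k]
    have h2 : ‖Complex.exp (X k)‖ ≤ Real.exp C := by
      rw [Complex.norm_exp]
      exact Real.exp_le_exp.mpr (hXre k)
    have h1 : ‖((k - (k₀:ℂ))/(k + (k₀:ℂ))) ^ (Complex.I * (ν:ℂ))‖ ≤ Real.exp (Real.pi * |ν|) := by
      set z : ℂ := (k - (k₀:ℂ))/(k + (k₀:ℂ))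
      have hb := Complex.norm_cpow_le z (Complex.I * (ν:ℂ))
      have hre0 : (Complex.I * (ν:ℂ)).re = 0 := by simp
      have him : (Complex.I * (ν:ℂ)).im = ν := by simp
      rw [hre0, him, Real.rpow_zero, one_div, ← Real.exp_neg] at hb
      refine hb.trans (Real.exp_le_exp.mpr ?_)
      have ha := Complex.abs_arg_le_pi z
      calc -(z.arg * ν) ≤ |z.arg * ν| := neg_le_abs _
        _ = |z.arg| * |ν| := abs_mul _ _
        _ ≤ Real.pi * |ν| := mul_le_mul_of_nonneg_right ha (abs_nonneg _)
    calc ‖((k - (k₀:ℂ))/(k + (k₀:ℂ))) ^ (Complex.I * (ν:ℂ)) * Complex.exp (X k)‖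
        = ‖((k - (k₀:ℂ))/(k + (k₀:ℂ))) ^ (Complex.I * (ν:ℂ))‖ * ‖Complex.exp (X k)‖ :=
          norm_mul _ _
      _ ≤ Real.exp (Real.pi * |ν|) * Real.exp C :=
          mul_le_mul h1 h2 (norm_nonneg _) (Real.exp_nonneg _)
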